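/- Let γ ≥ γ' > 0. Then there exists a constant M_{γ,γ'} ≥ 0, depending only on γ and γ', such that for all normed vector spaces E and F, every subset U ⊆ E and every collection f = (f⁰, …, fⁿ) that is Lip-γ on U (with γ = n + ε), the truncated collection (f⁰, …, f^{n'}) (with γ' = n' + ε') is Lip-γ' on U and ‖(f⁰,…,f^{n'})‖_{Lip-γ'} ≤ M_{γ,γ'} · ‖f‖_{Lip-γ}. -/

import Mathlib

open Metric Set

noncomputable section

/-- The Taylor remainder of order `k` associated to the collection
`f = (f⁰, f¹, …, fⁿ)` (each `fᵏ` viewed as a continuous `k`-linear map),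
evaluated at the elementary tensor `v₁ ⊗ ⋯ ⊗ v_k`:
`Rₖ(x,y)(v) = fᵏ(x)(v) - ∑_{j=k}^{n} fʲ(y)(v ⊗ (x-y)^{⊗(j-k)}/(j-k)!)`. -/
def lipRemainder {E F : Type*} [NormedAddCommGroup E] [NormedSpace ℝ E]
    [NormedAddCommGroup F] [NormedSpace ℝ F]
    (n : ℕ) (f : ∀ k : ℕ, E → ContinuousMultilinearMap ℝ (fun _ : Fin k => E) F)
    (k : ℕ) (x y : E) (v : Fin k → E) : F :=
  f k x v - ∑ j ∈ Finset.range (n - k + 1),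
    ((j.factorial : ℝ)⁻¹) • f (k + j) y (Fin.append v fun _ : Fin j => x - y)

/-- The collection `(f^{k₀}, …, fⁿ)` satisfies the `Lip-γ` bounds with constant `M`
on `U`: each `fᵏ` is bounded by `M` (as a multilinear map) and each remainder of
order `k` is bounded by `M ‖x-y‖^{γ-k}` (times the norm of the tensor).
Taking `k₀ = 0` gives the usual notion of a `Lip-γ` collection; taking `k₀ = 1`
expresses that the shifted collection `(f¹, …, fⁿ)` is `Lip-(γ-1)`. -/
def IsLipCollBetween {E F : Type*} [NormedAddCommGroup E] [NormedSpace ℝ E]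
    [NormedAddCommGroup F] [NormedSpace ℝ F]
    (γ : ℝ) (k₀ n : ℕ) (M : ℝ)
    (f : ∀ k : ℕ, E → ContinuousMultilinearMap ℝ (fun _ : Fin k => E) F)
    (U : Set E) : Prop :=
  (∀ k, k₀ ≤ k → k ≤ n → ∀ x ∈ U, ∀ v : Fin k → E,
      ‖f k x v‖ ≤ M * ∏ i, ‖v i‖) ∧
  (∀ k, k₀ ≤ k → k ≤ n → ∀ x ∈ U, ∀ y ∈ U, ∀ v : Fin k → E,
      ‖lipRemainder n f k x y v‖ ≤ M * ‖x - y‖ ^ (γ - k) * ∏ i, ‖v i‖)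

/-- Each member of the collection takes values in the symmetric multilinear maps. -/
def IsSymmColl {E F : Type*} [NormedAddCommGroup E] [NormedSpace ℝ E]
    [NormedAddCommGroup F] [NormedSpace ℝ F]
    (n : ℕ)
    (f : ∀ k : ℕ, E → ContinuousMultilinearMap ℝ (fun _ : Fin k => E) F)
    (U : Set E) : Prop :=
  ∀ k, k ≤ n → ∀ x ∈ U, ∀ (σ : Equiv.Perm (Fin k)) (v : Fin k → E),
    f k x (v ∘ σ) = f k x v
set_option maxHeartbeats 2000000 in
/-- **Embedding between Lipschitz spaces** (Theorem 2.4).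
For `0 < γ' ≤ γ` there is a constant `C` depending only on `γ` and `γ'` such
that any Lip-γ collection `f = (f⁰,…,fⁿ)` on a subset `U` (with norm at most
`M`), truncated at level `n' = ⌈γ'⌉` , is Lip-γ' on `U` with norm at most `C·M`. -/
theorem statement2 (γ γ' : ℝ) (n n' : ℕ) (ε ε' : ℝ)
    (hε0 : 0 < ε) (hε1 : ε ≤ 1) (hε'0 : 0 < ε') (hε'1 : ε' ≤ 1)
    (hγ : γ = n + ε) (hγ' : γ' = n' + ε') (hle : γ' ≤ γ) :
    ∃ C : ℝ, 0 ≤ C ∧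
      ∀ (E : Type*) (F : Type*) [NormedAddCommGroup E] [NormedSpace ℝ E]
        [NormedAddCommGroup F] [NormedSpace ℝ F]
        (U : Set E) (M : ℝ), 0 ≤ M →
        ∀ (f : ∀ k : ℕ, E → ContinuousMultilinearMap ℝ (fun _ : Fin k => E) F),
        IsSymmColl n f U →
        IsLipCollBetween γ 0 n M f U →
        IsLipCollBetween γ' 0 n' (C * M) f U := by
  refine ⟨(n : ℝ) + 2, by positivity, ?_⟩
  intro E F _ _ _ _ U M hM f _hsym hlip
  obtain ⟨hb, hr⟩ := hlip
  have hn'n : n' ≤ n := by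
    by_contra h
    push_neg at h
    have h1 : (n : ℝ) + 1 ≤ (n' : ℝ) := by exact_mod_cast h
    nlinarith
  constructor
  · intro k _ hkn' x hx v
    have h1 := hb k (Nat.zero_le _) (hkn'.trans hn'n) x hx v
    have hP : (0:ℝ) ≤ ∏ i, ‖v i‖ := Finset.prod_nonneg fun i _ => norm_nonneg _
    have hMP : M * ∏ i, ‖v i‖ ≤ ((n:ℝ) + 2) * M * ∏ i, ‖v i‖ := by
      have : (0:ℝ) ≤ M * ∏ i, ‖v i‖ := mul_nonneg hM hP
      nlinarith [Nat.cast_nonneg (α := ℝ) n]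
    linarith
  · intro k _ hkn' x hx y hy v
    have hkn : k ≤ n := hkn'.trans hn'n
    set t : ℝ := ‖x - y‖ with htdef
    have ht0 : (0:ℝ) ≤ t := norm_nonneg _
    set P : ℝ := ∏ i, ‖v i‖ with hPdef
    have hP : (0:ℝ) ≤ P := Finset.prod_nonneg fun i _ => norm_nonneg _
    have hkr : (k : ℝ) ≤ (n' : ℝ) := by exact_mod_cast hkn'
    have hexp : (0:ℝ) < γ' - k := by
      have : (k : ℝ) ≤ n' := hkr
      nlinarith
    have hT : (0:ℝ) ≤ t ^ (γ' - (k:ℝ)) := Real.rpow_nonneg ht0 _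
    -- bound on a single term of the sum
    have hterm : ∀ j : ℕ, k + j ≤ n →
        ‖((j.factorial : ℝ)⁻¹) • f (k + j) y (Fin.append v fun _ : Fin j => x - y)‖
          ≤ M * P * t ^ j := by
      intro j hj
      rw [norm_smul]
      have h1 := hb (k + j) (Nat.zero_le _) hj y hy (Fin.append v fun _ : Fin j => x - y)
      have hprod : (∏ i : Fin (k + j), ‖Fin.append v (fun _ : Fin j => x - y) i‖)
          = P * t ^ j := by
        rw [Fin.prod_univ_add]
        simp [Fin.append_left, Fin.append_right, hPdef, htdef]
      rw [hprod] at h1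
      have hfac : ‖((j.factorial : ℝ)⁻¹)‖ ≤ 1 := by
        rw [Real.norm_eq_abs, abs_of_nonneg (by positivity)]
        rw [inv_le_one_iff₀]
        right
        exact_mod_cast Nat.one_le_iff_ne_zero.mpr j.factorial_ne_zero
      calc ‖((j.factorial : ℝ)⁻¹)‖ * ‖f (k + j) y (Fin.append v fun _ : Fin j => x - y)‖
          ≤ 1 * (M * (P * t ^ j)) := by
            apply mul_le_mul hfac h1 (norm_nonneg _)
            norm_num
        _ = M * P * t ^ j := by ring
    rcases le_or_gt t 1 with hcase | hcase
    · -- t ≤ 1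
      have hsum : ∑ j ∈ Finset.range (n - k + 1),
            ((j.factorial : ℝ)⁻¹) • f (k + j) y (Fin.append v fun _ : Fin j => x - y)
          = (∑ j ∈ Finset.range (n' - k + 1),
              ((j.factorial : ℝ)⁻¹) • f (k + j) y (Fin.append v fun _ : Fin j => x - y))
            + ∑ j ∈ Finset.Ico (n' - k + 1) (n - k + 1),
              ((j.factorial : ℝ)⁻¹) • f (k + j) y (Fin.append v fun _ : Fin j => x - y) := by
        exact (Finset.sum_range_add_sum_Ico
          (fun j => ((j.factorial : ℝ)⁻¹) • f (k + j) y (Fin.append v fun _ : Fin j => x - y))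
          (by omega : n' - k + 1 ≤ n - k + 1)).symm
      have hsplit : lipRemainder n' f k x y v = lipRemainder n f k x y v
          + ∑ j ∈ Finset.Ico (n' - k + 1) (n - k + 1),
            ((j.factorial : ℝ)⁻¹) • f (k + j) y (Fin.append v fun _ : Fin j => x - y) := by
        unfold lipRemainder
        rw [hsum]
        abel
      have h1 : ‖lipRemainder n f k x y v‖ ≤ M * t ^ (γ' - (k:ℝ)) * P := by
        refine (hr k (Nat.zero_le _) hkn x hx y hy v).trans ?_
        have h3 : t ^ (γ - (k:ℝ)) ≤ t ^ (γ' - (k:ℝ)) :=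
          Real.rpow_le_rpow_of_exponent_ge' ht0 hcase (le_of_lt hexp) (by linarith)
        have h4 := mul_le_mul_of_nonneg_left h3 hM
        nlinarith
      have h2 : ∀ j ∈ Finset.Ico (n' - k + 1) (n - k + 1),
          ‖((j.factorial : ℝ)⁻¹) • f (k + j) y (Fin.append v fun _ : Fin j => x - y)‖
            ≤ M * t ^ (γ' - (k:ℝ)) * P := by
        intro j hj
        simp only [Finset.mem_Ico] at hj
        refine (hterm j (by omega)).trans ?_
        have hje : γ' - (k:ℝ) ≤ (j : ℝ) := by
          have hj1 : (n' : ℝ) - (k:ℝ) + 1 ≤ (j : ℝ) := by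
            have hh : n' - k + 1 ≤ j := hj.1
            have h2 : ((n' - k + 1 : ℕ) : ℝ) ≤ (j : ℝ) := by exact_mod_cast hh
            rwa [Nat.cast_add, Nat.cast_sub hkn', Nat.cast_one] at h2
          nlinarith
        have h3 : t ^ ((j:ℝ)) ≤ t ^ (γ' - (k:ℝ)) :=
          Real.rpow_le_rpow_of_exponent_ge' ht0 hcase (le_of_lt hexp) hje
        rw [Real.rpow_natCast] at h3
        have h4 := mul_le_mul_of_nonneg_left h3 (mul_nonneg hM hP)
        nlinarith
      have hS : ‖∑ j ∈ Finset.Ico (n' - k + 1) (n - k + 1),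
            ((j.factorial : ℝ)⁻¹) • f (k + j) y (Fin.append v fun _ : Fin j => x - y)‖
          ≤ (n : ℝ) * (M * t ^ (γ' - (k:ℝ)) * P) := by
        refine (norm_sum_le _ _).trans ?_
        refine (Finset.sum_le_sum h2).trans ?_
        rw [Finset.sum_const, Nat.card_Ico, nsmul_eq_mul]
        have hcard : (n - k + 1) - (n' - k + 1) ≤ n := by omega
        have hcc : (((n - k + 1) - (n' - k + 1) : ℕ) : ℝ) ≤ (n : ℝ) := by exact_mod_cast hcard
        have h0 : (0:ℝ) ≤ M * t ^ (γ' - (k:ℝ)) * P := by positivity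
        exact mul_le_mul_of_nonneg_right hcc h0
      rw [hsplit]
      refine (norm_add_le _ _).trans ?_
      have h0 : (0:ℝ) ≤ M * t ^ (γ' - (k:ℝ)) * P := by positivity
      calc ‖lipRemainder n f k x y v‖
          + ‖∑ j ∈ Finset.Ico (n' - k + 1) (n - k + 1),
              ((j.factorial : ℝ)⁻¹) • f (k + j) y (Fin.append v fun _ : Fin j => x - y)‖
          ≤ M * t ^ (γ' - (k:ℝ)) * P + (n : ℝ) * (M * t ^ (γ' - (k:ℝ)) * P) :=
            add_le_add h1 hS
        _ = ((n:ℝ) + 1) * (M * t ^ (γ' - (k:ℝ)) * P) := by ring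
        _ ≤ ((n:ℝ) + 2) * (M * t ^ (γ' - (k:ℝ)) * P) :=
            mul_le_mul_of_nonneg_right (by linarith) h0
        _ = ((n:ℝ) + 2) * M * t ^ (γ' - (k:ℝ)) * P := by ring
    · -- t > 1
      have hone : (1:ℝ) ≤ t ^ (γ' - (k:ℝ)) :=
        Real.one_le_rpow (le_of_lt hcase) (le_of_lt hexp)
      have h0' : ‖f k x v‖ ≤ M * t ^ (γ' - (k:ℝ)) * P := by
        refine (hb k (Nat.zero_le _) hkn x hx v).trans ?_
        have h4 := mul_le_mul_of_nonneg_left hone hM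
        nlinarith
      have h2 : ∀ j ∈ Finset.range (n' - k + 1),
          ‖((j.factorial : ℝ)⁻¹) • f (k + j) y (Fin.append v fun _ : Fin j => x - y)‖
            ≤ M * t ^ (γ' - (k:ℝ)) * P := by
        intro j hj
        simp only [Finset.mem_range] at hj
        refine (hterm j (by omega)).trans ?_
        have hje : (j : ℝ) ≤ γ' - (k:ℝ) := by
          have hh : j ≤ n' - k := by omega
          have h2 : (j : ℝ) ≤ ((n' - k : ℕ) : ℝ) := by exact_mod_cast hh
          rw [Nat.cast_sub hkn'] at h2
          nlinarith
        have h3 : t ^ ((j:ℝ)) ≤ t ^ (γ' - (k:ℝ)) :=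
          Real.rpow_le_rpow_of_exponent_le (le_of_lt hcase) hje
        rw [Real.rpow_natCast] at h3
        have h4 := mul_le_mul_of_nonneg_left h3 (mul_nonneg hM hP)
        nlinarith
      have hS : ‖∑ j ∈ Finset.range (n' - k + 1),
            ((j.factorial : ℝ)⁻¹) • f (k + j) y (Fin.append v fun _ : Fin j => x - y)‖
          ≤ ((n:ℝ) + 1) * (M * t ^ (γ' - (k:ℝ)) * P) := by
        refine (norm_sum_le _ _).trans ?_
        refine (Finset.sum_le_sum h2).trans ?_
        rw [Finset.sum_const, Finset.card_range, nsmul_eq_mul]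
        have hcard : n' - k + 1 ≤ n + 1 := by omega
        have hcc : ((n' - k + 1 : ℕ) : ℝ) ≤ (n : ℝ) + 1 := by exact_mod_cast hcard
        have h0 : (0:ℝ) ≤ M * t ^ (γ' - (k:ℝ)) * P := by positivity
        exact mul_le_mul_of_nonneg_right hcc h0
      show ‖lipRemainder n' f k x y v‖ ≤ _
      unfold lipRemainder
      refine (norm_sub_le _ _).trans ?_
      have h0 : (0:ℝ) ≤ M * t ^ (γ' - (k:ℝ)) * P := by positivity
      calc ‖f k x v‖
          + ‖∑ j ∈ Finset.range (n' - k + 1),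
              ((j.factorial : ℝ)⁻¹) • f (k + j) y (Fin.append v fun _ : Fin j => x - y)‖
          ≤ M * t ^ (γ' - (k:ℝ)) * P + ((n:ℝ) + 1) * (M * t ^ (γ' - (k:ℝ)) * P) :=
            add_le_add h0' hS
        _ = ((n:ℝ) + 2) * M * t ^ (γ' - (k:ℝ)) * P := by ring


end
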